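/- For all t ≥ 1, R_2^{(A)}(2^t + 1) = 2/3 + 2^t/8 − (−2)^t/24 as rational numbers. -/

import Mathlib

open Finset

/-- The Thue-Morse sequence: t 0 = 0, t (2n) = t n, t (2n+1) = 1 - t n. -/
def tm (n : ℕ) : ℕ :=
  if h : n = 0 then 0
  else if n % 2 = 0 then tm (n / 2) else 1 - tm (n / 2)
decreasing_by all_goals exact Nat.div_lt_self (Nat.pos_of_ne_zero h) one_lt_two

/-- R₂ for the evil numbers A = {n : t n = 0}. -/
noncomputable def R2A (n : ℕ) : ℕ :=
  Nat.card {p : ℕ × ℕ | tm p.1 = 0 ∧ tm p.2 = 0 ∧ p.1 < p.2 ∧ p.1 + p.2 = n}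

lemma tm_zero : tm 0 = 0 := by rw [tm]; rfl

lemma tm_two_mul (n : ℕ) : tm (2 * n) = tm n := by
  rcases Nat.eq_zero_or_pos n with h | h
  · subst h; norm_num
  · rw [tm]
    have h1 : ¬ (2 * n = 0) := by omega
    have h2 : 2 * n % 2 = 0 := by omega
    have h3 : 2 * n / 2 = n := by omega
    simp [h1, h2, h3]

lemma tm_two_mul_add_one (n : ℕ) : tm (2 * n + 1) = 1 - tm n := by
  rw [tm]
  have h1 : ¬ (2 * n + 1 = 0) := by omega
  have h2 : ¬ ((2 * n + 1) % 2 = 0) := by omega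
  have h3 : (2 * n + 1) / 2 = n := by omega
  simp [h1, h2, h3]

lemma tm_le_one (n : ℕ) : tm n ≤ 1 := by
  induction n using Nat.strong_induction_on with
  | _ n ih =>
    rw [tm]
    split
    · omega
    · split
      · exact ih _ (Nat.div_lt_self (by omega) one_lt_two)
      · exact Nat.sub_le _ _

lemma tm_pow_add : ∀ m : ℕ, ∀ v < 2 ^ m, tm (2 ^ m + v) = 1 - tm v := by
  intro m
  induction m with
  | zero =>
    intro v hv
    interval_cases v
    rw [tm_zero, show 2 ^ 0 + 0 = 2 * 0 + 1 by norm_num, tm_two_mul_add_one, tm_zero]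
  | succ m ih =>
    intro v hv
    rcases Nat.even_or_odd v with ⟨u, hu⟩ | ⟨u, hu⟩
    · have hul : u < 2 ^ m := by
        have : 2 ^ (m + 1) = 2 * 2 ^ m := by ring
        omega
      have e1 : 2 ^ (m + 1) + v = 2 * (2 ^ m + u) := by rw [hu]; ring
      have e2 : v = 2 * u := by omega
      rw [e1, tm_two_mul, ih u hul, e2, tm_two_mul]
    · have hul : u < 2 ^ m := by
        have : 2 ^ (m + 1) = 2 * 2 ^ m := by ring
        omega
      have e1 : 2 ^ (m + 1) + v = 2 * (2 ^ m + u) + 1 := by rw [hu]; ring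
      rw [e1, tm_two_mul_add_one, ih u hul, hu, tm_two_mul_add_one]

lemma tm_two_pow (m : ℕ) : tm (2 ^ m) = 1 := by
  have := tm_pow_add m 0 (Nat.pow_pos (by norm_num))
  simpa [tm_zero] using this

lemma tm_compl : ∀ m : ℕ, ∀ v < 2 ^ m, (tm v + tm (2 ^ m - 1 - v)) % 2 = m % 2 := by
  intro m
  induction m with
  | zero =>
    intro v hv
    interval_cases v
    simp [tm_zero]
  | succ m ih =>
    intro v hv
    have hp : 2 ^ (m + 1) = 2 * 2 ^ m := by ring
    rcases Nat.even_or_odd v with ⟨u, hu⟩ | ⟨u, hu⟩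
    · have hul : u < 2 ^ m := by omega
      have e1 : 2 ^ (m + 1) - 1 - v = 2 * (2 ^ m - 1 - u) + 1 := by omega
      have e2 : v = 2 * u := by omega
      have h1 := tm_le_one u
      have h2 := tm_le_one (2 ^ m - 1 - u)
      have h3 := ih u hul
      rw [e1, e2, tm_two_mul, tm_two_mul_add_one]
      omega
    · have hul : u < 2 ^ m := by omega
      have e1 : 2 ^ (m + 1) - 1 - v = 2 * (2 ^ m - 1 - u) := by omega
      have h1 := tm_le_one u
      have h2 := tm_le_one (2 ^ m - 1 - u)
      have h3 := ih u hul
      rw [e1, hu, tm_two_mul, tm_two_mul_add_one]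
      omega

lemma sum_range_two_mul (n : ℕ) (f : ℕ → ℕ) :
    ∑ v ∈ range (2 * n), f v = ∑ v ∈ range n, (f (2 * v) + f (2 * v + 1)) := by
  induction n with
  | zero => simp
  | succ n ih =>
    rw [show 2 * (n + 1) = (2 * n + 1) + 1 by ring, sum_range_succ, sum_range_succ, ih,
      sum_range_succ]
    ring

lemma evil_count (m : ℕ) :
    ((range (2 ^ (m + 1))).filter (fun v => tm v = 0)).card = 2 ^ m := by
  rw [card_filter, show 2 ^ (m + 1) = 2 * 2 ^ m by ring, sum_range_two_mul]
  have : ∀ v ∈ range (2 ^ m),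
      ((if tm (2 * v) = 0 then 1 else 0) + if tm (2 * v + 1) = 0 then 1 else 0) = 1 := by
    intro v _
    rw [tm_two_mul, tm_two_mul_add_one]
    have := tm_le_one v
    rcases Nat.le_one_iff_eq_zero_or_eq_one.mp this with h | h <;> simp [h]
  rw [sum_congr rfl this]
  simp

def Bset (m : ℕ) : Finset ℕ :=
  (range (2 ^ m + 1)).filter (fun u => tm u = 0 ∧ tm (2 ^ m - u) = 1)

def Dset (m : ℕ) : Finset ℕ :=
  (range (2 ^ m)).filter (fun v => tm v = 1 ∧ tm (2 ^ m - 1 - v) = 0)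

lemma Bset_succ (m : ℕ) : (Bset (m + 1)).card = (Bset m).card + (Dset m).card := by
  rw [Bset, Bset, Dset, card_filter, card_filter, card_filter]
  rw [show 2 ^ (m + 1) + 1 = 2 * 2 ^ m + 1 by ring, sum_range_succ, sum_range_two_mul]
  have hlast : (if tm (2 * 2 ^ m) = 0 ∧ tm (2 ^ (m + 1) - 2 * 2 ^ m) = 1 then 1 else 0) = 0 := by
    have : tm (2 * 2 ^ m) = 1 := by rw [tm_two_mul, tm_two_pow]
    simp [this]
  rw [hlast, add_zero]
  have hpt : ∀ v ∈ range (2 ^ m),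
      ((if tm (2 * v) = 0 ∧ tm (2 ^ (m + 1) - 2 * v) = 1 then 1 else 0)
        + if tm (2 * v + 1) = 0 ∧ tm (2 ^ (m + 1) - (2 * v + 1)) = 1 then 1 else 0)
      = ((if tm v = 0 ∧ tm (2 ^ m - v) = 1 then 1 else 0)
        + if tm v = 1 ∧ tm (2 ^ m - 1 - v) = 0 then 1 else 0) := by
    intro v hv
    rw [mem_range] at hv
    have hp : 2 ^ (m + 1) = 2 * 2 ^ m := by ring
    have e1 : 2 ^ (m + 1) - 2 * v = 2 * (2 ^ m - v) := by omega
    have e2 : 2 ^ (m + 1) - (2 * v + 1) = 2 * (2 ^ m - 1 - v) + 1 := by omega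
    rw [e1, e2, tm_two_mul, tm_two_mul, tm_two_mul_add_one, tm_two_mul_add_one]
    have h1 := tm_le_one v
    have h2 := tm_le_one (2 ^ m - 1 - v)
    have c1 : (1 - tm v = 0) ↔ tm v = 1 := by omega
    have c2 : (1 - tm (2 ^ m - 1 - v) = 1) ↔ tm (2 ^ m - 1 - v) = 0 := by omega
    simp only [c1, c2]
  rw [sum_congr rfl hpt, sum_add_distrib]
  congr 1
  rw [sum_range_succ]
  have : (if tm (2 ^ m) = 0 ∧ tm (2 ^ m - 2 ^ m) = 1 then 1 else 0) = 0 := by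
    simp [tm_two_pow]
  rw [this, add_zero]

lemma Dset_even (m : ℕ) (hm : m % 2 = 0) : (Dset m).card = 0 := by
  rw [card_eq_zero, Dset, filter_eq_empty_iff]
  intro v hv
  rw [mem_range] at hv
  have := tm_compl m v hv
  rintro ⟨h1, h2⟩
  rw [h1, h2] at this
  omega

lemma Dset_odd (j : ℕ) : (Dset (2 * j + 1)).card = 2 ^ (2 * j) := by
  have heq : Dset (2 * j + 1) = (range (2 ^ (2 * j + 1))).filter (fun v => ¬ tm v = 0) := by
    rw [Dset]
    apply filter_congr
    intro v hv
    rw [mem_range] at hv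
    have hc := tm_compl (2 * j + 1) v hv
    have h1 := tm_le_one v
    have h2 := tm_le_one (2 ^ (2 * j + 1) - 1 - v)
    constructor
    · rintro ⟨ha, _⟩; simp [ha]
    · intro h
      constructor
      · omega
      · omega
  rw [heq]
  have := card_filter_add_card_filter_not (s := range (2 ^ (2 * j + 1)))
    (p := fun v => tm v = 0)
  rw [card_range] at this
  have he := evil_count (2 * j)
  have hp : 2 ^ (2 * j + 1) = 2 * 2 ^ (2 * j) := by ring
  omega

lemma Bset_zero : (Bset 0).card = 1 := by
  rw [Bset]
  rw [show (2 : ℕ) ^ 0 + 1 = 2 by norm_num]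
  rw [show range 2 = {0, 1} by rfl]
  rw [filter_insert, filter_singleton]
  have h0 : tm 0 = 0 := tm_zero
  have h1 : tm 1 = 1 := by simpa using tm_two_pow 0
  simp [h0, h1]

def Gset (s : ℕ) : Finset ℕ :=
  (range (2 ^ s + 1)).filter (fun x => tm x = 0 ∧ tm (2 ^ (s + 1) + 1 - x) = 0)

lemma r2a_eq (s : ℕ) : R2A (2 ^ (s + 1) + 1) = (Gset s).card := by
  have hp : (2 : ℕ) ^ (s + 1) = 2 * 2 ^ s := by ring
  have hp1 : (1 : ℕ) ≤ 2 ^ s := Nat.one_le_two_pow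
  have hset : {p : ℕ × ℕ | tm p.1 = 0 ∧ tm p.2 = 0 ∧ p.1 < p.2 ∧ p.1 + p.2 = 2 ^ (s + 1) + 1}
      = ↑((Gset s).image (fun x => (x, 2 ^ (s + 1) + 1 - x))) := by
    ext ⟨x, y⟩
    simp only [Set.mem_setOf_eq, coe_image, Set.mem_image, mem_coe, Gset, mem_filter,
      mem_range, Prod.mk.injEq]
    constructor
    · rintro ⟨h1, h2, h3, h4⟩
      exact ⟨x, ⟨by omega, h1, by rw [show 2 ^ (s + 1) + 1 - x = y by omega]; exact h2⟩,
        rfl, by omega⟩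
    · rintro ⟨a, ⟨ha1, ha2, ha3⟩, rfl, rfl⟩
      exact ⟨ha2, ha3, by omega, by omega⟩
  rw [R2A, hset, Nat.card_coe_set_eq, Set.ncard_coe_finset]
  apply card_image_of_injOn
  intro a _ b _ h
  exact congrArg Prod.fst h

lemma G_eq_B (s : ℕ) : (Gset s).card = (Bset s).card := by
  have hp : (2 : ℕ) ^ (s + 1) = 2 * 2 ^ s := by ring
  have hp1 : (1 : ℕ) ≤ 2 ^ s := Nat.one_le_two_pow
  apply card_nbij' (fun x => if x % 2 = 0 then x / 2 else 2 ^ s - (x - 1) / 2)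
    (fun u => if 2 * u ≤ 2 ^ s then 2 * u else 2 * (2 ^ s - u) + 1)
  · -- maps into Bset
    intro x hx
    simp only [mem_coe, Gset, mem_filter, mem_range] at hx
    obtain ⟨hxr, hx0, hxy⟩ := hx
    by_cases he : x % 2 = 0
    · have hxu : x = 2 * (x / 2) := by omega
      set u := x / 2 with hu
      have htmu : tm u = 0 := by rw [hxu, tm_two_mul] at hx0; exact hx0
      have e1 : 2 ^ (s + 1) + 1 - x = 2 * (2 ^ s - u) + 1 := by omega
      rw [e1, tm_two_mul_add_one] at hxy
      have h2 := tm_le_one (2 ^ s - u)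
      simp only [if_pos he, mem_coe, Bset, mem_filter, mem_range]
      exact ⟨by omega, htmu, by rw [← hu]; omega⟩
    · have hxu : x = 2 * ((x - 1) / 2) + 1 := by omega
      set u := (x - 1) / 2 with hu
      have hu2 : 2 * u + 1 ≤ 2 ^ s := by omega
      have htmu : tm u = 1 := by
        rw [hxu, tm_two_mul_add_one] at hx0
        have := tm_le_one u
        omega
      have e1 : 2 ^ (s + 1) + 1 - x = 2 * (2 ^ s - u) := by omega
      rw [e1, tm_two_mul] at hxy
      simp only [if_neg he, mem_coe, Bset, mem_filter, mem_range]
      refine ⟨by omega, hxy, ?_⟩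
      rw [show 2 ^ s - (2 ^ s - u) = u by omega]
      exact htmu
  · -- maps into Gset
    intro u hu
    simp only [mem_coe, Bset, mem_filter, mem_range] at hu
    obtain ⟨hur, hu0, hu1⟩ := hu
    by_cases hc : 2 * u ≤ 2 ^ s
    · simp only [if_pos hc, mem_coe, Gset, mem_filter, mem_range]
      refine ⟨by omega, by rw [tm_two_mul]; exact hu0, ?_⟩
      rw [show 2 ^ (s + 1) + 1 - 2 * u = 2 * (2 ^ s - u) + 1 by omega, tm_two_mul_add_one, hu1]
    · simp only [if_neg hc, mem_coe, Gset, mem_filter, mem_range]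
      have h2 := tm_le_one (2 ^ s - u)
      refine ⟨by omega, by rw [tm_two_mul_add_one, hu1], ?_⟩
      rw [show 2 ^ (s + 1) + 1 - (2 * (2 ^ s - u) + 1) = 2 * u by omega, tm_two_mul]
      exact hu0
  · -- left inverse
    intro x hx
    simp only [mem_coe, Gset, mem_filter, mem_range] at hx
    obtain ⟨hxr, -, -⟩ := hx
    beta_reduce
    by_cases he : x % 2 = 0
    · rw [if_pos he, if_pos (by omega)]
      omega
    · rw [if_neg he, if_neg (by omega)]
      omega
  · -- right inverse
    intro u hu
    simp only [mem_coe, Bset, mem_filter, mem_range] at hu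
    obtain ⟨hur, -, -⟩ := hu
    beta_reduce
    by_cases hc : 2 * u ≤ 2 ^ s
    · rw [if_pos hc, if_pos (by omega)]
      omega
    · rw [if_neg hc, if_neg (by omega)]
      omega

lemma Bval (m : ℕ) : ((Bset m).card : ℚ) = 2 / 3 + (2 : ℚ) ^ m / 4 + (-2 : ℚ) ^ m / 12 := by
  induction m with
  | zero => rw [Bset_zero]; norm_num
  | succ m ih =>
    rcases Nat.even_or_odd m with hm | hm
    · have hd : (Dset m).card = 0 := Dset_even m (Nat.even_iff.mp hm)
      have h : ((Bset (m + 1)).card : ℚ) = ((Bset m).card : ℚ) := by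
        rw [Bset_succ, hd]; norm_num
      rw [h, ih, hm.neg_pow, (hm.add_one).neg_pow, pow_succ]
      ring
    · obtain ⟨j, hj⟩ := hm
      have hd : (Dset m).card = 2 ^ (2 * j) := by rw [hj]; exact Dset_odd j
      have h : ((Bset (m + 1)).card : ℚ) = ((Bset m).card : ℚ) + (2 : ℚ) ^ (2 * j) := by
        rw [Bset_succ, hd]; push_cast; ring
      have hom : Odd m := ⟨j, hj⟩
      rw [h, ih, hom.neg_pow, (hom.add_one).neg_pow, hj, pow_succ, pow_succ, pow_succ]
      ring

theorem r2a_pow_add_one_closed (t : ℕ) (ht : 1 ≤ t) :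
    (R2A (2 ^ t + 1) : ℚ) = 2 / 3 + (2 : ℚ) ^ t / 8 - (-2 : ℚ) ^ t / 24 := by
  obtain ⟨s, rfl⟩ : ∃ s, t = s + 1 := ⟨t - 1, by omega⟩
  rw [r2a_eq, G_eq_B, Bval, pow_succ, pow_succ]
  ring
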